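/- Let N ≥ 2, let A be an irreducible N×N real matrix satisfying Condition A1 with normalized positive left eigenvector ξ, Ξ = diag(ξ), U = Ξ − ξξ^T, and let Ã be any irreducible N×N matrix satisfying Condition A2. Let Δ = diag(δ_1,…,δ_n) be any diagonal matrix and Γ = diag(γ_1,…,γ_n) with all γ_j > 0. Then there exist constants c > 0 and η > 0 such that both U ⊗ Δ + cη (Ã ⊗ I_n) and ((Ξ A + A^T Ξ)/2) ⊗ Γ − η (Ã ⊗ I_n) are negative semidefinite. -/

import Mathlib

open Matrix

namespace Stmt7Aux

variable {N : ℕ}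

/-- quadratic form of a matrix -/
def QF (M : Matrix (Fin N) (Fin N) ℝ) (y : Fin N → ℝ) : ℝ :=
  ∑ i, ∑ j, M i j * y i * y j

lemma qf_shift (M : Matrix (Fin N) (Fin N) ℝ)
    (hrow : ∀ i, ∑ j, M i j = 0) (hcol : ∀ j, ∑ i, M i j = 0)
    (y : Fin N → ℝ) (t : ℝ) :
    QF M (fun i => y i + t) = QF M y := by
  unfold QF
  have hrow' : ∀ i, ∑ j, M i j * (y i + t) * (y j + t)
      = (∑ j, M i j * y i * y j) + t * ∑ j, M i j * y j := by
    intro i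
    have h : ∀ j, M i j * (y i + t) * (y j + t)
        = (M i j * y i * y j + t * (M i j * y j)) + (y i * t + t * t) * M i j := by
      intro j; ring
    rw [Finset.sum_congr rfl fun j _ => h j, Finset.sum_add_distrib,
      Finset.sum_add_distrib, ← Finset.mul_sum, ← Finset.mul_sum, hrow i]
    ring
  rw [Finset.sum_congr rfl fun i _ => hrow' i, Finset.sum_add_distrib, ← Finset.mul_sum]
  have h2 : ∑ i, ∑ j, M i j * y j = 0 := by
    rw [Finset.sum_comm]
    have : ∀ j, ∑ i, M i j * y j = (∑ i, M i j) * y j := by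
      intro j; rw [Finset.sum_mul]
    rw [Finset.sum_congr rfl fun j _ => this j]
    simp [hcol]
  rw [h2]; ring

lemma qf_abs_le (M : Matrix (Fin N) (Fin N) ℝ) (z : Fin N → ℝ) :
    |QF M z| ≤ (∑ i, ∑ j, |M i j|) * ∑ i, (z i)^2 := by
  have hS : ∀ i, (z i)^2 ≤ ∑ l, (z l)^2 := fun i =>
    Finset.single_le_sum (fun l _ => sq_nonneg (z l)) (Finset.mem_univ i)
  have key : ∀ i j, |M i j * z i * z j| ≤ |M i j| * ∑ l, (z l)^2 := by
    intro i j
    rw [abs_mul, abs_mul, mul_assoc]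
    refine mul_le_mul_of_nonneg_left ?_ (abs_nonneg _)
    have h1 := two_mul_le_add_sq (|z i|) (|z j|)
    have h2 : |z i|^2 = (z i)^2 := sq_abs _
    have h3 : |z j|^2 = (z j)^2 := sq_abs _
    nlinarith [hS i, hS j, abs_nonneg (z i), abs_nonneg (z j)]
  calc |QF M z| ≤ ∑ i, |∑ j, M i j * z i * z j| := Finset.abs_sum_le_sum_abs _ _
    _ ≤ ∑ i, ∑ j, |M i j * z i * z j| :=
        Finset.sum_le_sum fun i _ => Finset.abs_sum_le_sum_abs _ _
    _ ≤ ∑ i, ∑ j, |M i j| * ∑ l, (z l)^2 :=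
        Finset.sum_le_sum fun i _ => Finset.sum_le_sum fun j _ => key i j
    _ = (∑ i, ∑ j, |M i j|) * ∑ i, (z i)^2 := by
        rw [Finset.sum_mul]
        exact Finset.sum_congr rfl fun i _ => by rw [Finset.sum_mul]

lemma qf_neg_of_nonconst (M : Matrix (Fin N) (Fin N) ℝ)
    (hsym : ∀ i j, M i j = M j i)
    (hoff : ∀ i j, i ≠ j → 0 ≤ M i j)
    (hrow : ∀ i, ∑ j, M i j = 0)
    (hirr : ∀ S : Finset (Fin N), S.Nonempty → S ≠ Finset.univ →
      ∃ i ∈ S, ∃ j, j ∉ S ∧ M i j ≠ 0)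
    (z : Fin N → ℝ) (a b : Fin N) (hz : z a ≠ z b) :
    QF M z < 0 := by
  -- identity: ∑∑ M i j (z i - z j)^2 = -2 QF
  have hId : ∑ i, ∑ j, M i j * (z i - z j)^2 = -2 * QF M z := by
    unfold QF
    have hrow' : ∀ i, ∑ j, M i j * (z i - z j)^2
        = -2 * ∑ j, M i j * z i * z j + ∑ j, M i j * (z j)^2 := by
      intro i
      have h : ∀ j, M i j * (z i - z j)^2
          = ((-2) * (M i j * z i * z j) + M i j * (z j)^2) + (z i)^2 * M i j := by
        intro j; ring
      rw [Finset.sum_congr rfl fun j _ => h j, Finset.sum_add_distrib,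
        Finset.sum_add_distrib, ← Finset.mul_sum, ← Finset.mul_sum, hrow i]
      ring
    rw [Finset.sum_congr rfl fun i _ => hrow' i, Finset.sum_add_distrib, ← Finset.mul_sum]
    have h2 : ∑ i, ∑ j, M i j * (z j)^2 = 0 := by
      rw [Finset.sum_comm]
      have : ∀ j, ∑ i, M i j * (z j)^2 = (∑ i, M j i) * (z j)^2 := by
        intro j
        rw [Finset.sum_mul]
        exact Finset.sum_congr rfl fun i _ => by rw [hsym i j]
      rw [Finset.sum_congr rfl fun j _ => this j]
      simp [hrow]
    rw [h2]; ring
  -- positivity of the sum of squares part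
  have hpos : 0 < ∑ i, ∑ j, M i j * (z i - z j)^2 := by
    have hnn : ∀ i j, 0 ≤ M i j * (z i - z j)^2 := by
      intro i j
      rcases eq_or_ne i j with h | h
      · subst h; simp
      · exact mul_nonneg (hoff i j h) (sq_nonneg _)
    set S : Finset (Fin N) := Finset.univ.filter (fun i => z i = z a) with hSdef
    have haS : a ∈ S := by simp [hSdef]
    have hbS : b ∉ S := by simp only [hSdef, Finset.mem_filter, Finset.mem_univ, true_and]; exact fun h => hz h.symm
    obtain ⟨i, hiS, j, hjS, hMij⟩ := hirr S ⟨a, haS⟩ (fun h => hbS (h ▸ Finset.mem_univ b))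
    have hzi : z i = z a := by simpa [hSdef] using hiS
    have hzj : z j ≠ z a := by simpa [hSdef] using hjS
    have hij : i ≠ j := fun h => hzj (h ▸ hzi)
    have hM : 0 < M i j := lt_of_le_of_ne (hoff i j hij) (Ne.symm hMij)
    have hterm : 0 < M i j * (z i - z j)^2 := by
      have : z i - z j ≠ 0 := sub_ne_zero.mpr (by rw [hzi]; exact fun h => hzj h.symm)
      positivity
    refine Finset.sum_pos' (fun i _ => Finset.sum_nonneg fun j _ => hnn i j) ⟨i, Finset.mem_univ i, ?_⟩
    exact Finset.sum_pos' (fun j _ => hnn i j) ⟨j, Finset.mem_univ j, hterm⟩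
  linarith


lemma qf_gap (hN : 2 ≤ N) (M : Matrix (Fin N) (Fin N) ℝ)
    (hsym : ∀ i j, M i j = M j i)
    (hoff : ∀ i j, i ≠ j → 0 ≤ M i j)
    (hrow : ∀ i, ∑ j, M i j = 0)
    (hirr : ∀ S : Finset (Fin N), S.Nonempty → S ≠ Finset.univ →
      ∃ i ∈ S, ∃ j, j ∉ S ∧ M i j ≠ 0) :
    ∃ μ : ℝ, 0 < μ ∧ ∀ z : Fin N → ℝ, ∑ i, z i = 0 →
      QF M z ≤ -(μ * ∑ i, (z i)^2) := by
  set C : Set (Fin N → ℝ) := {z | ∑ i, z i = 0 ∧ ∑ i, (z i)^2 = 1} with hC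
  have hcont : Continuous (fun z : Fin N → ℝ => QF M z) := by
    unfold QF; fun_prop
  have hcont1 : Continuous (fun z : Fin N → ℝ => ∑ i, z i) := by fun_prop
  have hcont2 : Continuous (fun z : Fin N → ℝ => ∑ i, (z i)^2) := by fun_prop
  have hclosed : IsClosed C :=
    (isClosed_eq hcont1 continuous_const).inter (isClosed_eq hcont2 continuous_const)
  have hbdd : Bornology.IsBounded C := by
    rw [Metric.isBounded_iff_subset_closedBall 0]
    refine ⟨1, fun z hz => ?_⟩
    rw [Metric.mem_closedBall, dist_zero_right]
    rw [pi_norm_le_iff_of_nonneg (by norm_num)]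
    intro i
    have h1 : (z i)^2 ≤ 1 := by
      have := Finset.single_le_sum (f := fun l => (z l)^2)
        (fun l _ => sq_nonneg (z l)) (Finset.mem_univ i)
      rw [hz.2] at this; exact this
    have : |z i| ≤ 1 := abs_le.2 ⟨by nlinarith, by nlinarith⟩
    simpa using this
  have hcompact : IsCompact C := Metric.isCompact_of_isClosed_isBounded hclosed hbdd
  -- nonempty
  have hne : C.Nonempty := by
    set a : ℝ := Real.sqrt (1/2) with ha
    have ha2 : a^2 = 1/2 := Real.sq_sqrt (by norm_num)
    set u : Fin N := ⟨0, by omega⟩ with hu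
    set v : Fin N := ⟨1, by omega⟩ with hv
    have huv : u ≠ v := by simp [hu, hv, Fin.ext_iff]
    refine ⟨fun i => if i = u then a else if i = v then -a else 0, ?_, ?_⟩
    · have h : ∀ i, (if i = u then a else if i = v then -a else 0)
          = (if i = u then a else 0) + (if i = v then -a else 0) := by
        intro i
        by_cases h1 : i = u
        · by_cases h2 : i = v
          · exact absurd (h1.symm.trans h2) huv
          · simp [h1, h2, huv, huv.symm]
        · by_cases h2 : i = v <;> simp [h1, h2, huv, huv.symm]
      rw [Finset.sum_congr rfl fun i _ => h i, Finset.sum_add_distrib]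
      rw [Finset.sum_ite_eq' Finset.univ u (fun _ => a),
        Finset.sum_ite_eq' Finset.univ v (fun _ => -a)]
      simp
    · have h : ∀ i, (if i = u then a else if i = v then -a else 0)^2
          = (if i = u then a^2 else 0) + (if i = v then a^2 else 0) := by
        intro i
        by_cases h1 : i = u
        · by_cases h2 : i = v
          · exact absurd (h1.symm.trans h2) huv
          · simp [h1, h2, huv, huv.symm]
        · by_cases h2 : i = v <;> simp [h1, h2, huv, huv.symm]
      rw [Finset.sum_congr rfl fun i _ => h i, Finset.sum_add_distrib]
      rw [Finset.sum_ite_eq' Finset.univ u (fun _ => a^2),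
        Finset.sum_ite_eq' Finset.univ v (fun _ => a^2)]
      simp [ha2]; norm_num
  obtain ⟨z₁, hz₁C, hmax⟩ := hcompact.exists_isMaxOn hne hcont.continuousOn
  -- z₁ is nonconstant
  have hNnz : (N : ℝ) ≠ 0 := by positivity
  have hnc : ∃ a b, z₁ a ≠ z₁ b := by
    by_contra h
    push_neg at h
    have u : Fin N := ⟨0, by omega⟩
    have h0 : ∀ i, z₁ i = 0 := by
      have hsum := hz₁C.1
      have hconst : ∀ i, z₁ i = z₁ ⟨0, by omega⟩ := fun i => h i _
      rw [Finset.sum_congr rfl fun i _ => hconst i, Finset.sum_const,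
        Finset.card_univ, Fintype.card_fin, nsmul_eq_mul] at hsum
      intro i
      rw [hconst i]
      rcases mul_eq_zero.mp hsum with h' | h'
      · exact absurd h' hNnz
      · exact h'
    have : ∑ i, (z₁ i)^2 = 0 := by
      rw [Finset.sum_congr rfl fun i _ => by rw [h0 i]]; simp
    rw [hz₁C.2] at this; norm_num at this
  obtain ⟨a, b, hab⟩ := hnc
  have hμpos : 0 < -(QF M z₁) := by
    have := qf_neg_of_nonconst M hsym hoff hrow hirr z₁ a b hab
    linarith
  refine ⟨-(QF M z₁), hμpos, fun z hz0 => ?_⟩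
  set μ := -(QF M z₁) with hμ
  rcases eq_or_ne (∑ i, (z i)^2) 0 with hs | hs
  · have hzero : ∀ i, z i = 0 := by
      intro i
      have := (Finset.sum_eq_zero_iff_of_nonneg (fun l _ => sq_nonneg (z l))).1 hs i
        (Finset.mem_univ i)
      exact pow_eq_zero_iff (n := 2) (by norm_num) |>.mp this
    have : QF M z = 0 := by
      unfold QF
      apply Finset.sum_eq_zero; intro i _
      apply Finset.sum_eq_zero; intro j _
      rw [hzero i]; ring
    rw [this, hs]; simp
  · set s := ∑ i, (z i)^2 with hsdef
    have hspos : 0 < s := lt_of_le_of_ne (Finset.sum_nonneg fun l _ => sq_nonneg (z l)) (Ne.symm hs)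
    set r := Real.sqrt s with hrdef
    have hrpos : 0 < r := Real.sqrt_pos.2 hspos
    have hrr : r * r = s := Real.mul_self_sqrt hspos.le
    set w : Fin N → ℝ := fun i => z i / r with hwdef
    have hwC : w ∈ C := by
      constructor
      · show ∑ i, z i / r = 0
        rw [← Finset.sum_div, hz0, zero_div]
      · show ∑ i, (z i / r)^2 = 1
        have : ∀ i, (z i / r)^2 = (z i)^2 / s := by
          intro i; rw [div_pow]; congr 1; rw [sq]; exact hrr
        rw [Finset.sum_congr rfl fun i _ => this i, ← Finset.sum_div, ← hsdef,
          div_self hspos.ne']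
    have hscale : QF M z = s * QF M w := by
      unfold QF
      rw [Finset.mul_sum]
      refine Finset.sum_congr rfl fun i _ => ?_
      rw [Finset.mul_sum]
      refine Finset.sum_congr rfl fun j _ => ?_
      show M i j * z i * z j = s * (M i j * (z i / r) * (z j / r))
      field_simp
      rw [← hrr]; ring
    have hle : QF M w ≤ QF M z₁ := hmax hwC
    calc QF M z = s * QF M w := hscale
      _ ≤ s * QF M z₁ := mul_le_mul_of_nonneg_left hle hspos.le
      _ = -(μ * s) := by rw [hμ]; ring
      _ = -(μ * ∑ i, (z i)^2) := by rw [hsdef]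

end Stmt7Aux


/-- Let A be an irreducible matrix satisfying Condition A1 (N ≥ 2) with
normalized positive left 0-eigenvector ξ, U = Ξ − ξξᵀ, and let Ã be any irreducible
matrix satisfying Condition A2. For any diagonal Δ = diag(δ₁,…,δₙ) and positive
diagonal Γ = diag(γ₁,…,γₙ), there exist c > 0 and η > 0 such that both
U ⊗ Δ + cη (Ã ⊗ Iₙ) and ((ΞA + AᵀΞ)/2) ⊗ Γ − η (Ã ⊗ Iₙ) are negative semidefinite,
expressed via their quadratic forms on stacked block vectors x = (x₁ᵀ,…,x_Nᵀ)ᵀ. -/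
theorem stmt7 (N n : ℕ) (hN : 2 ≤ N) (A : Matrix (Fin N) (Fin N) ℝ)
    (hoff : ∀ i j, i ≠ j → 0 ≤ A i j)
    (hdiag : ∀ i, A i i = -∑ j ∈ Finset.univ.erase i, A i j)
    (hirr : ∀ S : Finset (Fin N), S.Nonempty → S ≠ Finset.univ →
      ∃ i ∈ S, ∃ j, j ∉ S ∧ A i j ≠ 0)
    (ξ : Fin N → ℝ) (hξpos : ∀ i, 0 < ξ i) (hξsum : ∑ i, ξ i = 1)
    (hξeig : Matrix.vecMul ξ A = 0)
    (At : Matrix (Fin N) (Fin N) ℝ)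
    (hAtsym : ∀ i j, At i j = At j i)
    (hAtoff : ∀ i j, i ≠ j → 0 ≤ At i j)
    (hAtdiag : ∀ i, At i i = -∑ j ∈ Finset.univ.erase i, At i j)
    (hAtirr : ∀ S : Finset (Fin N), S.Nonempty → S ≠ Finset.univ →
      ∃ i ∈ S, ∃ j, j ∉ S ∧ At i j ≠ 0)
    (δ : Fin n → ℝ) (γ : Fin n → ℝ) (hγ : ∀ k, 0 < γ k) :
    ∃ c : ℝ, 0 < c ∧ ∃ η : ℝ, 0 < η ∧
      (∀ x : Fin N → Fin n → ℝ,
        ∑ i, ∑ j, ∑ k,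
            (((if i = j then ξ i else 0) - ξ i * ξ j) * δ k + c * η * At i j)
              * x i k * x j k ≤ 0) ∧
      (∀ x : Fin N → Fin n → ℝ,
        ∑ i, ∑ j, ∑ k,
            (((ξ i * A i j + A j i * ξ j) / 2) * γ k - η * At i j)
              * x i k * x j k ≤ 0) := by
  classical
  have hArow : ∀ i, ∑ j, A i j = 0 := by
    intro i
    rw [← Finset.add_sum_erase Finset.univ (A i) (Finset.mem_univ i), hdiag i]; ring
  have hAtrow : ∀ i, ∑ j, At i j = 0 := by
    intro i
    rw [← Finset.add_sum_erase Finset.univ (At i) (Finset.mem_univ i), hAtdiag i]; ring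
  have hAtcol : ∀ j, ∑ i, At i j = 0 := by
    intro j
    rw [Finset.sum_congr rfl fun i _ => hAtsym i j]
    exact hAtrow j
  have hξcol : ∀ j, ∑ i, ξ i * A i j = 0 := by
    intro j
    have := congrFun hξeig j
    simpa [Matrix.vecMul, dotProduct] using this
  set U : Matrix (Fin N) (Fin N) ℝ := fun i j => (if i = j then ξ i else 0) - ξ i * ξ j
    with hU
  have hUrow : ∀ i, ∑ j, U i j = 0 := by
    intro i
    simp only [hU]
    rw [Finset.sum_sub_distrib, Finset.sum_ite_eq Finset.univ i (fun _ => ξ i),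
      ← Finset.mul_sum, hξsum]
    simp
  have hUcol : ∀ j, ∑ i, U i j = 0 := by
    intro j
    simp only [hU]
    rw [Finset.sum_sub_distrib, Finset.sum_ite_eq' Finset.univ j ξ, ← Finset.sum_mul, hξsum]
    simp
  set B : Matrix (Fin N) (Fin N) ℝ := fun i j => (ξ i * A i j + A j i * ξ j) / 2 with hB
  have hBsym : ∀ i j, B i j = B j i := fun i j => by simp only [hB]; ring
  have hBoff : ∀ i j, i ≠ j → 0 ≤ B i j := by
    intro i j hij
    have h1 : 0 ≤ ξ i * A i j := mul_nonneg (hξpos i).le (hoff i j hij)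
    have h2 : 0 ≤ A j i * ξ j := mul_nonneg (hoff j i hij.symm) (hξpos j).le
    simp only [hB]; linarith
  have hBrow : ∀ i, ∑ j, B i j = 0 := by
    intro i
    simp only [hB]
    have h : ∀ j, (ξ i * A i j + A j i * ξ j) / 2 = ξ i * A i j / 2 + ξ j * A j i / 2 :=
      fun j => by ring
    rw [Finset.sum_congr rfl fun j _ => h j, Finset.sum_add_distrib]
    have e1 : ∑ j, ξ i * A i j / 2 = 0 := by
      rw [← Finset.sum_div, ← Finset.mul_sum, hArow i]; simp
    have e2 : ∑ j, ξ j * A j i / 2 = 0 := by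
      rw [← Finset.sum_div, hξcol i]; simp
    rw [e1, e2]; ring
  have hBcol : ∀ j, ∑ i, B i j = 0 := by
    intro j
    rw [Finset.sum_congr rfl fun i _ => hBsym i j]
    exact hBrow j
  have hBirr : ∀ S : Finset (Fin N), S.Nonempty → S ≠ Finset.univ →
      ∃ i ∈ S, ∃ j, j ∉ S ∧ B i j ≠ 0 := by
    intro S hS1 hS2
    obtain ⟨i, hiS, j, hjS, hAij⟩ := hirr S hS1 hS2
    have hij : i ≠ j := fun h => hjS (h ▸ hiS)
    have hA : 0 < A i j := lt_of_le_of_ne (hoff i j hij) (Ne.symm hAij)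
    have h2 : 0 ≤ A j i * ξ j := mul_nonneg (hoff j i hij.symm) (hξpos j).le
    have hBpos : 0 < B i j := by
      simp only [hB]
      have := mul_pos (hξpos i) hA
      linarith
    exact ⟨i, hiS, j, hjS, hBpos.ne'⟩
  obtain ⟨μ₁, hμ₁, hgap₁⟩ := Stmt7Aux.qf_gap hN At hAtsym hAtoff hAtrow hAtirr
  obtain ⟨μ₂, hμ₂, hgap₂⟩ := Stmt7Aux.qf_gap hN B hBsym hBoff hBrow hBirr
  rcases Nat.eq_zero_or_pos n with hn | hn
  · subst hn
    exact ⟨1, one_pos, 1, one_pos, fun x => by simp, fun x => by simp⟩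
  have hnne : (Finset.univ : Finset (Fin n)).Nonempty := ⟨⟨0, hn⟩, Finset.mem_univ _⟩
  set γg := Finset.univ.inf' hnne γ with hγg
  have hγgpos : 0 < γg := (Finset.lt_inf'_iff hnne).2 fun k _ => hγ k
  have hγgle : ∀ k, γg ≤ γ k := fun k => Finset.inf'_le γ (Finset.mem_univ k)
  set Sδ := ∑ k, |δ k| with hSδ
  have hSδle : ∀ k, |δ k| ≤ Sδ := fun k => by
    rw [hSδ]
    exact Finset.single_le_sum (fun l _ => abs_nonneg (δ l)) (Finset.mem_univ k)
  have hSδ0 : 0 ≤ Sδ := Finset.sum_nonneg fun l _ => abs_nonneg _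
  set L := ∑ i, ∑ j, |At i j| with hL
  have hL0 : 0 ≤ L :=
    Finset.sum_nonneg fun i _ => Finset.sum_nonneg fun j _ => abs_nonneg _
  set LU := ∑ i, ∑ j, |U i j| with hLU
  have hLU0 : 0 ≤ LU :=
    Finset.sum_nonneg fun i _ => Finset.sum_nonneg fun j _ => abs_nonneg _
  set η := γg * μ₂ / (L + 1) with hη
  have hηpos : 0 < η := div_pos (mul_pos hγgpos hμ₂) (by linarith)
  have hηL : η * (L + 1) = γg * μ₂ := by
    rw [hη]; field_simp
  set c := (Sδ * LU + 1) / (η * μ₁) with hc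
  have hcpos : 0 < c := div_pos (by nlinarith) (mul_pos hηpos hμ₁)
  have hcημ : c * η * μ₁ = Sδ * LU + 1 := by
    rw [hc]; field_simp
  clear_value γg Sδ L LU η c
  refine ⟨c, hcpos, η, hηpos, ?_, ?_⟩
  · intro x
    have key : ∀ k : Fin n,
        ∑ i, ∑ j, (((if i = j then ξ i else 0) - ξ i * ξ j) * δ k + c * η * At i j)
          * x i k * x j k ≤ 0 := by
      intro k
      set y : Fin N → ℝ := fun i => x i k with hy
      have hrw : δ k * Stmt7Aux.QF U y + (c * η) * Stmt7Aux.QF At y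
          = ∑ i, ∑ j, (((if i = j then ξ i else 0) - ξ i * ξ j) * δ k + c * η * At i j)
              * x i k * x j k := by
        unfold Stmt7Aux.QF
        rw [Finset.mul_sum, Finset.mul_sum, ← Finset.sum_add_distrib]
        refine Finset.sum_congr rfl fun i _ => ?_
        rw [Finset.mul_sum, Finset.mul_sum, ← Finset.sum_add_distrib]
        refine Finset.sum_congr rfl fun j _ => ?_
        simp only [hy, hU]
        ring
      rw [← hrw]
      set m := (∑ i, y i) / N with hm
      set z : Fin N → ℝ := fun i => y i - m with hz
      have hz0 : ∑ i, z i = 0 := by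
        simp only [hz]
        rw [Finset.sum_sub_distrib, Finset.sum_const, Finset.card_univ, Fintype.card_fin,
          nsmul_eq_mul, hm]
        have : (N : ℝ) ≠ 0 := by positivity
        field_simp
        ring
      have hyz : y = fun i => z i + m := by funext i; simp [hz]
      have h1 : Stmt7Aux.QF U y = Stmt7Aux.QF U z := by
        rw [hyz]; exact Stmt7Aux.qf_shift U hUrow hUcol z m
      have h2 : Stmt7Aux.QF At y = Stmt7Aux.QF At z := by
        rw [hyz]; exact Stmt7Aux.qf_shift At hAtrow hAtcol z m
      rw [h1, h2]
      set S := ∑ i, (z i)^2 with hSdef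
      have hSnn : 0 ≤ S := by
        rw [hSdef]; exact Finset.sum_nonneg fun i _ => sq_nonneg (z i)
      have e1 : δ k * Stmt7Aux.QF U z ≤ Sδ * (LU * S) := by
        calc δ k * Stmt7Aux.QF U z ≤ |δ k * Stmt7Aux.QF U z| := le_abs_self _
          _ = |δ k| * |Stmt7Aux.QF U z| := abs_mul _ _
          _ ≤ Sδ * (LU * S) := by
              refine mul_le_mul (hSδle k) ?_ (abs_nonneg _) hSδ0
              rw [hLU, hSdef]
              exact Stmt7Aux.qf_abs_le U z
      have e2 : Stmt7Aux.QF At z ≤ -(μ₁ * S) := by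
        rw [hSdef]; exact hgap₁ z hz0
      have e4 : c * η * Stmt7Aux.QF At z ≤ c * η * (-(μ₁ * S)) :=
        mul_le_mul_of_nonneg_left e2 (mul_pos hcpos hηpos).le
      have e3 : c * η * (-(μ₁ * S)) = -((Sδ * LU + 1) * S) := by
        rw [show c * η * (-(μ₁ * S)) = -(c * η * μ₁ * S) by ring, hcημ]
      have e5 : (Sδ * LU + 1) * S = Sδ * (LU * S) + S := by ring
      linarith
    calc ∑ i, ∑ j, ∑ k, (((if i = j then ξ i else 0) - ξ i * ξ j) * δ k + c * η * At i j)
            * x i k * x j k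
        = ∑ i, ∑ k, ∑ j, (((if i = j then ξ i else 0) - ξ i * ξ j) * δ k + c * η * At i j)
            * x i k * x j k := Finset.sum_congr rfl fun i _ => Finset.sum_comm
      _ = ∑ k, ∑ i, ∑ j, (((if i = j then ξ i else 0) - ξ i * ξ j) * δ k + c * η * At i j)
            * x i k * x j k := Finset.sum_comm
      _ ≤ 0 := Finset.sum_nonpos fun k _ => key k
  · intro x
    have key : ∀ k : Fin n,
        ∑ i, ∑ j, (((ξ i * A i j + A j i * ξ j) / 2) * γ k - η * At i j)
          * x i k * x j k ≤ 0 := by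
      intro k
      set y : Fin N → ℝ := fun i => x i k with hy
      have hrw : γ k * Stmt7Aux.QF B y - η * Stmt7Aux.QF At y
          = ∑ i, ∑ j, (((ξ i * A i j + A j i * ξ j) / 2) * γ k - η * At i j)
              * x i k * x j k := by
        unfold Stmt7Aux.QF
        rw [Finset.mul_sum, Finset.mul_sum, ← Finset.sum_sub_distrib]
        refine Finset.sum_congr rfl fun i _ => ?_
        rw [Finset.mul_sum, Finset.mul_sum, ← Finset.sum_sub_distrib]
        refine Finset.sum_congr rfl fun j _ => ?_
        simp only [hy, hB]
        ring
      rw [← hrw]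
      set m := (∑ i, y i) / N with hm
      set z : Fin N → ℝ := fun i => y i - m with hz
      have hz0 : ∑ i, z i = 0 := by
        simp only [hz]
        rw [Finset.sum_sub_distrib, Finset.sum_const, Finset.card_univ, Fintype.card_fin,
          nsmul_eq_mul, hm]
        have : (N : ℝ) ≠ 0 := by positivity
        field_simp
        ring
      have hyz : y = fun i => z i + m := by funext i; simp [hz]
      have h1 : Stmt7Aux.QF B y = Stmt7Aux.QF B z := by
        rw [hyz]; exact Stmt7Aux.qf_shift B hBrow hBcol z m
      have h2 : Stmt7Aux.QF At y = Stmt7Aux.QF At z := by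
        rw [hyz]; exact Stmt7Aux.qf_shift At hAtrow hAtcol z m
      rw [h1, h2]
      set S := ∑ i, (z i)^2 with hSdef
      have hSnn : 0 ≤ S := by
        rw [hSdef]; exact Finset.sum_nonneg fun i _ => sq_nonneg (z i)
      have hq2 : Stmt7Aux.QF B z ≤ -(μ₂ * S) := by
        rw [hSdef]; exact hgap₂ z hz0
      have e1 : γ k * Stmt7Aux.QF B z ≤ γg * (-(μ₂ * S)) := by
        calc γ k * Stmt7Aux.QF B z ≤ γ k * (-(μ₂ * S)) :=
              mul_le_mul_of_nonneg_left hq2 (hγ k).le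
          _ ≤ γg * (-(μ₂ * S)) := by
              refine mul_le_mul_of_nonpos_right (hγgle k) ?_
              have : 0 ≤ μ₂ * S := mul_nonneg hμ₂.le hSnn
              linarith
      have e2 : -(η * Stmt7Aux.QF At z) ≤ η * (L * S) := by
        rw [show -(η * Stmt7Aux.QF At z) = η * (-(Stmt7Aux.QF At z)) by ring]
        refine mul_le_mul_of_nonneg_left ?_ hηpos.le
        calc -(Stmt7Aux.QF At z) ≤ |Stmt7Aux.QF At z| := neg_le_abs _
          _ ≤ L * S := by rw [hL, hSdef]; exact Stmt7Aux.qf_abs_le At z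
      have e3 : γg * (μ₂ * S) = η * (L * S) + η * S := by
        calc γg * (μ₂ * S) = (γg * μ₂) * S := by ring
          _ = (η * (L + 1)) * S := by rw [hηL]
          _ = η * (L * S) + η * S := by ring
      have e4 : 0 ≤ η * S := mul_nonneg hηpos.le hSnn
      have e5 : γg * (-(μ₂ * S)) = -(γg * (μ₂ * S)) := by ring
      linarith
    calc ∑ i, ∑ j, ∑ k, (((ξ i * A i j + A j i * ξ j) / 2) * γ k - η * At i j)
            * x i k * x j k
        = ∑ i, ∑ k, ∑ j, (((ξ i * A i j + A j i * ξ j) / 2) * γ k - η * At i j)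
            * x i k * x j k := Finset.sum_congr rfl fun i _ => Finset.sum_comm
      _ = ∑ k, ∑ i, ∑ j, (((ξ i * A i j + A j i * ξ j) / 2) * γ k - η * At i j)
            * x i k * x j k := Finset.sum_comm
      _ ≤ 0 := Finset.sum_nonpos fun k _ => key k
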